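/- Let δ_i > 0 and 0 < ε < δ_i, and let g_{i,ε} : ℝ → ℝ be defined by g_{i,ε}(s) = 0 if |s| ≤ δ_i − ε, g_{i,ε}(s) = (1/(12ε))·(|s| − δ_i + ε)³ if δ_i − ε ≤ |s| ≤ δ_i + ε, and g_{i,ε}(s) = ε²/6 + (1/2)·(|s| − δ_i)² if |s| ≥ δ_i + ε. Set g_i(s) = (1/2)·(|s| − δ_i)₊². Then for every s ∈ ℝ one has |g_{i,ε}(s) − g_i(s)| ≤ ε²/6 and |g_{i,ε}'(s) − g_i'(s)| ≤ ε/4, where g_i'(s) = (|s| − δ_i)₊ · sign(s). -/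

import Mathlib

open Set

/-- The piecewise-defined `C²` regularization `g_{i,ε}` of `s ↦ (1/2)(|s| − δᵢ)₊²`. -/
noncomputable def greg (δi ε s : ℝ) : ℝ :=
  if |s| ≤ δi - ε then 0
  else if |s| ≤ δi + ε then 1 / (12 * ε) * (|s| - δi + ε) ^ 3
  else ε ^ 2 / 6 + 1 / 2 * (|s| - δi) ^ 2

/-- The one-dimensional profile of `greg`. -/
noncomputable def Fr (δi ε t : ℝ) : ℝ :=
  if t ≤ δi - ε then 0
  else if t ≤ δi + ε then 1 / (12 * ε) * (t - δi + ε) ^ 3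
  else ε ^ 2 / 6 + 1 / 2 * (t - δi) ^ 2

/-- The derivative of the profile. -/
noncomputable def Fr' (δi ε t : ℝ) : ℝ :=
  if t ≤ δi - ε then 0
  else if t ≤ δi + ε then 1 / (4 * ε) * (t - δi + ε) ^ 2
  else t - δi

lemma greg_eq (δi ε s : ℝ) : greg δi ε s = Fr δi ε |s| := rfl

lemma hp (δi ε : ℝ) (hε : 0 < ε) (x : ℝ) :
    HasDerivAt (fun y => 1 / (12 * ε) * (y - δi + ε) ^ 3) (1 / (4 * ε) * (x - δi + ε) ^ 2) x := by
  have h := ((((hasDerivAt_id x).sub_const δi).add_const ε).pow 3).const_mul (1 / (12 * ε))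
  refine h.congr_deriv ?_
  have hne : ε ≠ 0 := ne_of_gt hε
  simp only [id_eq]
  field_simp
  ring

lemma hq (δi ε : ℝ) (x : ℝ) :
    HasDerivAt (fun y => ε ^ 2 / 6 + 1 / 2 * (y - δi) ^ 2) (x - δi) x := by
  have h := ((((hasDerivAt_id x).sub_const δi).pow 2).const_mul (1 / 2)).const_add (ε ^ 2 / 6)
  refine h.congr_deriv ?_
  simp only [id_eq]
  ring

lemma Fr_hasDerivAt (δi ε : ℝ) (hε : 0 < ε) (t : ℝ) :
    HasDerivAt (Fr δi ε) (Fr' δi ε t) t := by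
  rcases lt_or_ge t (δi - ε) with h1 | h1
  · -- inner region
    have hFr' : Fr' δi ε t = 0 := if_pos h1.le
    rw [hFr']
    apply (hasDerivAt_const t (0 : ℝ)).congr_of_eventuallyEq
    filter_upwards [Iio_mem_nhds h1] with x hx
    exact if_pos (le_of_lt hx)
  · rcases eq_or_lt_of_le h1 with h1e | h1
    · -- t = δi - ε (junction 1)
      have hFr' : Fr' δi ε t = 0 := if_pos h1e.ge
      rw [hFr']
      have hleft : HasDerivWithinAt (Fr δi ε) 0 (Iic t) t := by
        apply (hasDerivAt_const t (0 : ℝ)).hasDerivWithinAt.congr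
        · intro y hy
          exact if_pos (le_trans hy h1e.ge)
        · exact if_pos h1e.ge
      have hright : HasDerivWithinAt (Fr δi ε) 0 (Ici t) t := by
        have hd := (hp δi ε hε t).hasDerivWithinAt (s := Ici t)
        have hz : 1 / (4 * ε) * (t - δi + ε) ^ 2 = 0 := by
          rw [← h1e]; ring
        rw [hz] at hd
        apply hd.congr_of_eventuallyEq
        · have hmem : Iio (δi + ε) ∈ nhdsWithin t (Ici t) :=
            mem_nhdsWithin_of_mem_nhds (Iio_mem_nhds (by rw [← h1e]; linarith))
          filter_upwards [self_mem_nhdsWithin, hmem] with x hx1 hx2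
          rcases le_or_gt x (δi - ε) with hc | hc
          · have hxe : x = δi - ε := le_antisymm hc (h1e ▸ hx1)
            rw [Fr, if_pos hc, hxe]; ring
          · rw [Fr, if_neg (not_le.2 hc), if_pos hx2.le]
        · rw [Fr, if_pos h1e.ge, ← h1e]; ring
      have := hleft.union hright
      rwa [Iic_union_Ici, hasDerivWithinAt_univ] at this
    · rcases lt_or_ge t (δi + ε) with h2 | h2
      · -- middle region
        have hFr' : Fr' δi ε t = 1 / (4 * ε) * (t - δi + ε) ^ 2 := by
          rw [Fr', if_neg (not_le.2 h1), if_pos h2.le]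
        rw [hFr']
        apply (hp δi ε hε t).congr_of_eventuallyEq
        filter_upwards [Ioo_mem_nhds h1 h2] with x hx
        rw [Fr, if_neg (not_le.2 hx.1), if_pos hx.2.le]
      · rcases eq_or_lt_of_le h2 with h2e | h2
        · -- t = δi + ε (junction 2)
          have hFr' : Fr' δi ε t = ε := by
            rw [Fr', if_neg (not_le.2 h1), if_pos h2e.ge, ← h2e]
            field_simp
            ring
          rw [hFr']
          have hleft : HasDerivWithinAt (Fr δi ε) ε (Iic t) t := by
            have hd := (hp δi ε hε t).hasDerivWithinAt (s := Iic t)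
            have hz : 1 / (4 * ε) * (t - δi + ε) ^ 2 = ε := by
              rw [← h2e]; field_simp; ring
            rw [hz] at hd
            apply hd.congr_of_eventuallyEq
            · have hmem : Ioi (δi - ε) ∈ nhdsWithin t (Iic t) :=
                mem_nhdsWithin_of_mem_nhds (Ioi_mem_nhds h1)
              filter_upwards [self_mem_nhdsWithin, hmem] with x hx1 hx2
              rw [Fr, if_neg (not_le.2 hx2), if_pos (le_trans hx1 h2e.ge)]
            · rw [Fr, if_neg (not_le.2 h1), if_pos h2e.ge]
          have hright : HasDerivWithinAt (Fr δi ε) ε (Ici t) t := by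
            have hd := (hq δi ε t).hasDerivWithinAt (s := Ici t)
            have hz : t - δi = ε := by rw [← h2e]; ring
            rw [hz] at hd
            apply hd.congr
            · intro y hy
              rcases eq_or_lt_of_le (mem_Ici.1 hy : t ≤ y) with hye | hye
              · rw [Fr, if_neg (not_le.2 (by linarith : δi - ε < y)),
                  if_pos (by rw [← hye, ← h2e] : y ≤ δi + ε), ← hye, ← h2e]
                field_simp
                ring
              · rw [Fr, if_neg (not_le.2 (by linarith : δi - ε < y)),
                  if_neg (not_le.2 (by rw [← h2e] at hye; linarith : δi + ε < y))]
            · rw [Fr, if_neg (not_le.2 h1), if_pos h2e.ge, ← h2e]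
              field_simp
              ring
          have := hleft.union hright
          rwa [Iic_union_Ici, hasDerivWithinAt_univ] at this
        · -- outer region
          have hFr' : Fr' δi ε t = t - δi := by
            rw [Fr', if_neg (not_le.2 h1), if_neg (not_le.2 h2)]
          rw [hFr']
          apply (hq δi ε t).congr_of_eventuallyEq
          filter_upwards [Ioi_mem_nhds h2] with x hx
          rw [Fr, if_neg (by push_neg; linarith [mem_Ioi.1 hx] : ¬ x ≤ δi - ε),
            if_neg (not_le.2 hx)]

lemma greg_hasDerivAt (δi ε : ℝ) (hε : 0 < ε) (hεδ : ε < δi) (s : ℝ) :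
    HasDerivAt (greg δi ε) (Fr' δi ε |s| * Real.sign s) s := by
  rcases lt_trichotomy s 0 with hs | hs | hs
  · rw [abs_of_neg hs, Real.sign_of_neg hs]
    have hd : HasDerivAt (fun x => Fr δi ε (-x)) (Fr' δi ε (-s) * (-1)) s :=
      (Fr_hasDerivAt δi ε hε (-s)).comp s (hasDerivAt_neg s)
    apply hd.congr_of_eventuallyEq
    filter_upwards [Iio_mem_nhds hs] with x hx
    rw [greg_eq, abs_of_neg hx]
  · subst hs
    rw [Real.sign_zero, mul_zero]
    apply (hasDerivAt_const (0 : ℝ) (0 : ℝ)).congr_of_eventuallyEq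
    have hmem : Ioo (-(δi - ε)) (δi - ε) ∈ nhds (0 : ℝ) :=
      Ioo_mem_nhds (by linarith) (by linarith)
    filter_upwards [hmem] with x hx
    rw [greg_eq, Fr, if_pos (abs_le.2 ⟨hx.1.le, hx.2.le⟩)]
  · rw [abs_of_pos hs, Real.sign_of_pos hs, mul_one]
    apply (Fr_hasDerivAt δi ε hε s).congr_of_eventuallyEq
    filter_upwards [Ioi_mem_nhds hs] with x hx
    rw [greg_eq, abs_of_pos hx]

lemma bound1 (δi ε : ℝ) (hε : 0 < ε) (t : ℝ) :
    |Fr δi ε t - 1 / 2 * (max (t - δi) 0) ^ 2| ≤ ε ^ 2 / 6 := by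
  rw [Fr]
  split_ifs with h1 h2
  · rw [max_eq_right (by linarith : t - δi ≤ 0)]
    simp
    positivity
  · push_neg at h1
    have e1 : 1 / (12 * ε) * (t - δi + ε) ^ 3 - 1 / 2 * (max (t - δi) 0) ^ 2 =
        ((t - δi + ε) ^ 3 - 6 * ε * (max (t - δi) 0) ^ 2) / (12 * ε) := by
      field_simp
      ring
    rw [e1, abs_div, abs_of_pos (by linarith : (0:ℝ) < 12 * ε), div_le_iff₀ (by linarith)]
    rcases le_total (t - δi) 0 with hm | hm
    · rw [max_eq_right hm, abs_le]
      constructor <;> nlinarith [sq_nonneg (t - δi + ε), sq_nonneg (t - δi - ε)]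
    · rw [max_eq_left hm, abs_le]
      constructor <;>
        nlinarith [mul_nonneg hm (sq_nonneg (t - δi - ε)),
          mul_nonneg (by linarith : (0:ℝ) ≤ ε - (t - δi)) (sq_nonneg (t - δi - ε)),
          mul_pos hε hε, mul_nonneg hε.le hm]
  · push_neg at h1 h2
    rw [max_eq_left (by linarith : 0 ≤ t - δi)]
    have he : ε ^ 2 / 6 + 1 / 2 * (t - δi) ^ 2 - 1 / 2 * (t - δi) ^ 2 = ε ^ 2 / 6 := by ring
    rw [he, abs_of_nonneg (by positivity)]

lemma bound2 (δi ε : ℝ) (hε : 0 < ε) (t : ℝ) :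
    |Fr' δi ε t - max (t - δi) 0| ≤ ε / 4 := by
  rw [Fr']
  split_ifs with h1 h2
  · rw [max_eq_right (by linarith : t - δi ≤ 0)]
    simp
    positivity
  · push_neg at h1
    have e1 : 1 / (4 * ε) * (t - δi + ε) ^ 2 - max (t - δi) 0 =
        ((t - δi + ε) ^ 2 - 4 * ε * max (t - δi) 0) / (4 * ε) := by
      field_simp
    rw [e1, abs_div, abs_of_pos (by linarith : (0:ℝ) < 4 * ε), div_le_iff₀ (by linarith)]
    rcases le_total (t - δi) 0 with hm | hm
    · rw [max_eq_right hm, abs_le]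
      constructor <;> nlinarith [sq_nonneg (t - δi + ε), sq_nonneg (t - δi - ε)]
    · rw [max_eq_left hm, abs_le]
      constructor <;> nlinarith [sq_nonneg (t - δi + ε), sq_nonneg (t - δi - ε)]
  · push_neg at h1 h2
    rw [max_eq_left (by linarith : 0 ≤ t - δi), sub_self, abs_zero]
    positivity

/-- Let `δᵢ > 0` and `0 < ε < δᵢ`, and set `g_i(s) = (1/2)(|s| − δᵢ)₊²`. Then for every
`s ∈ ℝ` one has `|g_{i,ε}(s) − g_i(s)| ≤ ε²/6` and `|g_{i,ε}'(s) − g_i'(s)| ≤ ε/4`,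
where `g_i'(s) = (|s| − δᵢ)₊ · sign(s)`. -/
theorem stmt7 (δi ε : ℝ) (hδ : 0 < δi) (hε : 0 < ε) (hεδ : ε < δi) :
    (∀ s : ℝ, |greg δi ε s - 1 / 2 * (max (|s| - δi) 0) ^ 2| ≤ ε ^ 2 / 6) ∧
      (∀ s : ℝ, |deriv (greg δi ε) s - max (|s| - δi) 0 * Real.sign s| ≤ ε / 4) := by
  constructor
  · intro s
    rw [greg_eq]
    exact bound1 δi ε hε |s|
  · intro s
    rw [(greg_hasDerivAt δi ε hε hεδ s).deriv, ← sub_mul, abs_mul]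
    have hsign : |Real.sign s| ≤ 1 := by
      rcases lt_trichotomy s 0 with hs | hs | hs
      · rw [Real.sign_of_neg hs]; norm_num
      · rw [hs, Real.sign_zero]; norm_num
      · rw [Real.sign_of_pos hs]; norm_num
    calc |Fr' δi ε |s| - max (|s| - δi) 0| * |Real.sign s|
        ≤ (ε / 4) * 1 := by
          apply mul_le_mul (bound2 δi ε hε |s|) hsign (abs_nonneg _) (by positivity)
      _ = ε / 4 := by ring
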